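/- arXiv:2403.12295 — 7 statements merged into one kernel-verified Lean document; each statement's English description precedes it below -/
import Mathlib

section
/- Let U be a random variable with values in [0,1] that is super-uniform, i.e. P(U ≤ u) ≤ u for all u ∈ [0,1], and let g : [0,1] → (0,∞) be a nonincreasing function. Then for any c > 0, E[ 1{U ≤ c·g(U)} / g(U) ] ≤ c. -/
open MeasureTheory

/-- Lemma 3.2 (i) of Blanchard–Roquain: for a super-uniform random variable `U` with values
in `[0,1]` and a nonincreasing positive function `g` on `[0,1]`,
`E[ 1{U ≤ c·g(U)} / g(U) ] ≤ c` for any `c > 0`. -/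
theorem stmt_0 {Ω : Type*} [MeasurableSpace Ω] (μ : Measure Ω) [IsProbabilityMeasure μ]
    (U : Ω → ℝ) (hUmeas : Measurable U) (hUrange : ∀ ω, U ω ∈ Set.Icc (0 : ℝ) 1)
    (hsup : ∀ u ∈ Set.Icc (0 : ℝ) 1, μ {ω | U ω ≤ u} ≤ ENNReal.ofReal u)
    (g : ℝ → ℝ) (hgmeas : Measurable g) (hganti : AntitoneOn g (Set.Icc 0 1))
    (hgpos : ∀ u ∈ Set.Icc (0 : ℝ) 1, 0 < g u)
    (c : ℝ) (hc : 0 < c) :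
    ∫ ω, (if U ω ≤ c * g (U ω) then 1 / g (U ω) else 0) ∂μ ≤ c := by
  set A : Set ℝ := {u | u ∈ Set.Icc (0 : ℝ) 1 ∧ u ≤ c * g u} with hA
  have h0A : (0 : ℝ) ∈ A :=
    ⟨⟨le_refl 0, zero_le_one⟩, (mul_pos hc (hgpos 0 ⟨le_rfl, zero_le_one⟩)).le⟩
  have hAne : A.Nonempty := ⟨0, h0A⟩
  have hAbdd : BddAbove A := ⟨1, fun x hx => hx.1.2⟩
  set s : ℝ := sSup A with hsdef
  have hs0 : 0 ≤ s := le_csSup hAbdd h0A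
  have hs1 : s ≤ 1 := csSup_le hAne fun x hx => hx.1.2
  have key : ∀ u ∈ A, ∀ v ∈ A, u ≤ c * g v := by
    intro u hu v hv
    rcases le_total u v with h | h
    · exact h.trans hv.2
    · exact hu.2.trans (mul_le_mul_of_nonneg_left (hganti hv.1 hu.1 h) hc.le)
  have key2 : ∀ v ∈ A, s ≤ c * g v := fun v hv =>
    csSup_le hAne fun u hu => key u hu v hv
  set K : ℝ := if s = 0 then 1 / g 1 else c / s with hK
  have hg1 : 0 < g 1 := hgpos 1 ⟨zero_le_one, le_rfl⟩
  have hK0 : 0 ≤ K := by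
    rw [hK]; split
    · positivity
    · exact (div_pos hc (lt_of_le_of_ne hs0 (Ne.symm ‹s ≠ 0›))).le
  have hKs : K * s ≤ c := by
    rw [hK]; split
    · rw [‹s = 0›, mul_zero]; exact hc.le
    · rw [div_mul_cancel₀ c ‹s ≠ 0›]
  have hpt : ∀ ω, (if U ω ≤ c * g (U ω) then 1 / g (U ω) else 0)
      ≤ Set.indicator {ω | U ω ≤ s} (fun _ => K) ω := by
    intro ω
    by_cases h : U ω ≤ c * g (U ω)
    · have hUA : U ω ∈ A := ⟨hUrange ω, h⟩
      have hUs : U ω ≤ s := le_csSup hAbdd hUA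
      have hgU : 0 < g (U ω) := hgpos _ (hUrange ω)
      have hind : ({ω | U ω ≤ s}).indicator (fun _ => K) ω = K :=
        Set.indicator_of_mem (show ω ∈ {ω | U ω ≤ s} from hUs) (fun _ => K)
      rw [if_pos h, hind, hK]; split
      · exact one_div_le_one_div_of_le hg1
          (hganti (hUrange ω) ⟨zero_le_one, le_rfl⟩ (hUrange ω).2)
      · have hspos : 0 < s := lt_of_le_of_ne hs0 (Ne.symm ‹s ≠ 0›)
        rw [div_le_div_iff₀ hgU hspos]
        have := key2 _ hUA
        linarith
    · rw [if_neg h]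
      exact Set.indicator_nonneg (fun _ _ => hK0) ω
  have hms : MeasurableSet {ω | U ω ≤ s} := measurableSet_le hUmeas measurable_const
  have hbint : Integrable (Set.indicator {ω | U ω ≤ s} (fun _ => K)) μ :=
    (integrable_const K).indicator hms
  calc ∫ ω, (if U ω ≤ c * g (U ω) then 1 / g (U ω) else 0) ∂μ
      ≤ ∫ ω, Set.indicator {ω | U ω ≤ s} (fun _ => K) ω ∂μ := by
        refine integral_mono_of_nonneg (Filter.Eventually.of_forall fun ω => ?_) hbint
          (Filter.Eventually.of_forall hpt)
        show (0 : ℝ) ≤ if U ω ≤ c * g (U ω) then 1 / g (U ω) else 0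
        split_ifs
        · exact (one_div_pos.mpr (hgpos _ (hUrange ω))).le
        · exact le_rfl
    _ = (μ {ω | U ω ≤ s}).toReal • K := integral_indicator_const K hms
    _ = (μ {ω | U ω ≤ s}).toReal * K := by rw [smul_eq_mul]
    _ ≤ s * K := by
        refine mul_le_mul_of_nonneg_right ?_ hK0
        exact ENNReal.toReal_le_of_le_ofReal hs0 (hsup s ⟨hs0, hs1⟩)
    _ = K * s := mul_comm _ _
    _ ≤ c := hKs
end

section
/- Let q_1, …, q_m ∈ [0,1] and let BH(q) = {i : q_i ≤ α·ℓ̂/m} where ℓ̂ = max{ℓ ∈ {0,…,m} : q_(ℓ) ≤ α·ℓ/m} (q_(1) ≤ … ≤ q_(m) are the order statistics, with the convention that ℓ̂ = 0 if the set is empty). Fix i ∈ {1,…,m} and let q^{0,i} denote the vector q with the i-th coordinate replaced by 0. Then i ∈ BH(q) if and only if BH(q) = BH(q^{0,i}). -/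
noncomputable section

/-- `ℓ̂ = max{ℓ ∈ {0,…,m} : q_(ℓ) ≤ α·ℓ/m}`, expressed through the equivalent counting
characterization `q_(ℓ) ≤ α·ℓ/m ↔ #{i : q_i ≤ α·ℓ/m} ≥ ℓ`. -/
def bhNum (m : ℕ) (α : ℝ) (q : Fin m → ℝ) : ℕ :=
  sSup {ℓ : ℕ | ℓ ≤ m ∧ ℓ ≤ (Finset.univ.filter fun i => q i ≤ α * (ℓ : ℝ) / (m : ℝ)).card}

/-- The Benjamini–Hochberg rejection set at level `α`: `BH(q) = {i : q_i ≤ α·ℓ̂/m}`. -/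
def bhSet (m : ℕ) (α : ℝ) (q : Fin m → ℝ) : Finset (Fin m) :=
  Finset.univ.filter fun i => q i ≤ α * (bhNum m α q : ℝ) / (m : ℝ)

private lemma bhNum_spec (m : ℕ) (α : ℝ) (q : Fin m → ℝ) :
    bhNum m α q ≤ m ∧
      bhNum m α q ≤
        (Finset.univ.filter fun i => q i ≤ α * (bhNum m α q : ℝ) / (m : ℝ)).card := by
  have h : bhNum m α q ∈
      {ℓ : ℕ | ℓ ≤ m ∧ ℓ ≤ (Finset.univ.filter fun i => q i ≤ α * (ℓ : ℝ) / (m : ℝ)).card} :=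
    Nat.sSup_mem ⟨0, ⟨Nat.zero_le m, Nat.zero_le _⟩⟩ ⟨m, fun _ hℓ => hℓ.1⟩
  exact h

private lemma le_bhNum (m : ℕ) (α : ℝ) (q : Fin m → ℝ) {ℓ : ℕ}
    (h1 : ℓ ≤ m)
    (h2 : ℓ ≤ (Finset.univ.filter fun i => q i ≤ α * (ℓ : ℝ) / (m : ℝ)).card) :
    ℓ ≤ bhNum m α q :=
  le_csSup ⟨m, fun _ hℓ => hℓ.1⟩ ⟨h1, h2⟩

/-- Leave-one-out property of BH: `i ∈ BH(q)` iff `BH(q) = BH(q^{0,i})`, where `q^{0,i}`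
is `q` with the `i`-th coordinate replaced by `0`. -/
theorem stmt_3 (m : ℕ) (hm : 0 < m) (α : ℝ) (hα : α ∈ Set.Ioo (0 : ℝ) 1)
    (q : Fin m → ℝ) (hq : ∀ i, q i ∈ Set.Icc (0 : ℝ) 1) (i : Fin m) :
    i ∈ bhSet m α q ↔ bhSet m α q = bhSet m α (Function.update q i 0) := by
  obtain ⟨hα0, hα1⟩ := hα
  set q' : Fin m → ℝ := Function.update q i 0 with hq'def
  have hq'le : ∀ j, q' j ≤ q j := by
    intro j
    by_cases h : j = i
    · subst h; simp [hq'def, (hq j).1]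
    · simp [hq'def, h]
  have hm0 : (0:ℝ) < (m:ℝ) := by exact_mod_cast hm
  constructor
  · intro hi
    have hiq : q i ≤ α * (bhNum m α q : ℝ) / (m : ℝ) := by
      simpa [bhSet] using hi
    -- bhNum q ≤ bhNum q'
    have h1 : bhNum m α q ≤ bhNum m α q' := by
      apply le_bhNum m α q' (bhNum_spec m α q).1
      refine le_trans (bhNum_spec m α q).2 (Finset.card_le_card ?_)
      intro j hj
      simp only [Finset.mem_filter, Finset.mem_univ, true_and] at hj ⊢
      exact le_trans (hq'le j) hj
    -- bhNum q' ≤ bhNum q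
    have h2 : bhNum m α q' ≤ bhNum m α q := by
      have hthr : α * (bhNum m α q : ℝ) / (m : ℝ)
          ≤ α * (bhNum m α q' : ℝ) / (m : ℝ) := by
        have hc : (bhNum m α q : ℝ) ≤ (bhNum m α q' : ℝ) := by exact_mod_cast h1
        gcongr
      have hiq' : q i ≤ α * (bhNum m α q' : ℝ) / (m : ℝ) := le_trans hiq hthr
      apply le_bhNum m α q (bhNum_spec m α q').1
      refine le_trans (bhNum_spec m α q').2 (le_of_eq ?_)
      congr 1
      apply Finset.filter_congr
      intro j _
      by_cases h : j = i
      · subst h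
        simp only [hq'def, Function.update_self]
        exact ⟨fun _ => hiq', fun _ => le_trans (hq j).1 hiq'⟩
      · simp [hq'def, h]
    have hnum : bhNum m α q' = bhNum m α q := le_antisymm h2 h1
    ext j
    simp only [bhSet, Finset.mem_filter, Finset.mem_univ, true_and, hnum]
    by_cases h : j = i
    · subst h
      simp only [hq'def, Function.update_self]
      constructor
      · intro _; positivity
      · intro _; exact hiq
    · simp [hq'def, h]
  · intro heq
    rw [heq]
    simp only [bhSet, Finset.mem_filter, Finset.mem_univ, true_and, hq'def,
      Function.update_self]
    positivity

end
end

section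
/- Let BH denote the Benjamini–Hochberg procedure at level α and write ℓ̂(q) = |BH(q)| for its number of rejections. Fix i ∈ {1,…,m} and suppose q, q' ∈ [0,1]^m satisfy: q'_j ≤ q_j whenever q_j ≤ q_i, and q'_j = q_j whenever q_j > q_i (for all j). Then {q_i ≤ α·ℓ̂(q)/m} = {q_i ≤ α·ℓ̂(q')/m}, and on this event ℓ̂(q) = ℓ̂(q'). -/
noncomputable section

/-- Lemma D.6 of Marandon et al.: if `q'` coincides with `q` above level `q_i` and is
pointwise smaller below, then `{q_i ≤ α·ℓ̂(q)/m} = {q_i ≤ α·ℓ̂(q')/m}`, and on this event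
`ℓ̂(q) = ℓ̂(q')`. -/
theorem stmt_4 (m : ℕ) (hm : 0 < m) (α : ℝ) (hα : α ∈ Set.Ioo (0 : ℝ) 1)
    (q q' : Fin m → ℝ) (hq : ∀ j, q j ∈ Set.Icc (0 : ℝ) 1)
    (hq' : ∀ j, q' j ∈ Set.Icc (0 : ℝ) 1) (i : Fin m)
    (hle : ∀ j, q j ≤ q i → q' j ≤ q j) (heq : ∀ j, q i < q j → q' j = q j) :
    ((q i ≤ α * (bhNum m α q : ℝ) / m) ↔ (q i ≤ α * (bhNum m α q' : ℝ) / m))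
    ∧ (q i ≤ α * (bhNum m α q : ℝ) / m → bhNum m α q = bhNum m α q') := by
  have hm' : (0:ℝ) < m := by exact_mod_cast hm
  set S : (Fin m → ℝ) → Set ℕ := fun r =>
    {ℓ : ℕ | ℓ ≤ m ∧ ℓ ≤ (Finset.univ.filter fun i => r i ≤ α * (ℓ : ℝ) / (m : ℝ)).card}
    with hS
  have hbdd : ∀ r, BddAbove (S r) := fun r => ⟨m, fun ℓ hℓ => hℓ.1⟩
  have hmem : ∀ r, bhNum m α r ∈ S r := fun r =>
    Nat.sSup_mem ⟨0, Nat.zero_le m, Nat.zero_le _⟩ (hbdd r)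
  have hle' : ∀ j, q' j ≤ q j := fun j => by
    rcases le_or_gt (q j) (q i) with h | h
    · exact hle j h
    · exact (heq j h).le
  have hsub : S q ⊆ S q' := by
    rintro ℓ ⟨h1, h2⟩
    refine ⟨h1, h2.trans (Finset.card_le_card ?_)⟩
    intro j hj
    simp only [Finset.mem_filter] at hj ⊢
    exact ⟨hj.1, (hle' j).trans hj.2⟩
  have hLL : bhNum m α q ≤ bhNum m α q' := le_csSup (hbdd q') (hsub (hmem q))
  have hcast : (bhNum m α q : ℝ) ≤ bhNum m α q' := by exact_mod_cast hLL
  have hmono : q i ≤ α * (bhNum m α q : ℝ) / m → q i ≤ α * (bhNum m α q' : ℝ) / m := by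
    intro h
    refine h.trans ?_
    gcongr
    exact hα.1.le
  have key : q i ≤ α * (bhNum m α q' : ℝ) / m → bhNum m α q' ∈ S q := by
    intro hqi
    obtain ⟨h1, h2⟩ := hmem q'
    refine ⟨h1, h2.trans (Finset.card_le_card ?_)⟩
    intro j hj
    simp only [Finset.mem_filter] at hj ⊢
    refine ⟨hj.1, ?_⟩
    rcases le_or_gt (q j) (q i) with h | h
    · exact h.trans hqi
    · rw [← heq j h]; exact hj.2
  have keyEq : q i ≤ α * (bhNum m α q' : ℝ) / m → bhNum m α q = bhNum m α q' := fun h =>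
    le_antisymm hLL (le_csSup (hbdd q) (key h))
  constructor
  · constructor
    · exact hmono
    · intro h
      rw [keyEq h]; exact h
  · exact fun h => keyEq (hmono h)

end
end

section
/- Let m ≥ 1 and suppose that for each i ∈ {1,…,m} there are real-valued 'p-values' U_i ∈ [0,1] and random variables V_i ≥ 1 such that: (a) P(U_i ≤ t | W_i) ≤ t for all t ∈ [0,1] for some σ-field generated random element W_i; and (b) V_i = g_i(U_i) where g_i is a nonincreasing function measurable with respect to W_i. Then E[ Σ_{i=1}^m 1{U_i ≤ α·V_i/m} / V_i ] ≤ α for any α ∈ (0,1). -/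
open MeasureTheory
open scoped ENNReal

/-- Key single-index lemma: for a conditionally super-uniform `u` and an antitone,
`𝔉`-measurable-in-`ω` function `g` with `g ω (u ω) ≥ 1`, the expected value of
`1{u ≤ c·g(u)}/g(u)` is at most `c/δ` for any `δ ∈ (0,1)`. -/
lemma fcr_key {Ω : Type*} [mΩ : MeasurableSpace Ω] (μ : Measure Ω) [IsProbabilityMeasure μ]
    (c δ : ℝ) (hc : 0 < c) (hδ0 : 0 < δ) (hδ1 : δ < 1)
    (u : Ω → ℝ) (hu : Measurable u) (hu1 : ∀ ω, u ω ≤ 1)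
    (𝔉 : MeasurableSpace Ω) (h𝔉 : 𝔉 ≤ mΩ)
    (hsup : ∀ t ∈ Set.Icc (0:ℝ) 1, ∀ A : Set Ω, MeasurableSet[𝔉] A →
      μ ({ω | u ω ≤ t} ∩ A) ≤ ENNReal.ofReal t * μ A)
    (g : Ω → ℝ → ℝ) (hg : ∀ ω, Antitone (g ω))
    (hgmeas : ∀ t : ℝ, Measurable[𝔉] fun ω => g ω t)
    (hg1 : ∀ ω, 1 ≤ g ω (u ω)) :
    ∫⁻ ω, ENNReal.ofReal (if u ω ≤ c * g ω (u ω) then 1 / g ω (u ω) else 0) ∂μ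
      ≤ ENNReal.ofReal (c / δ) := by
  classical
  set h : Ω → ℚ → ℝ := fun ω q =>
    if 0 ≤ (q:ℝ) ∧ (q:ℝ) ≤ 1 ∧ (q:ℝ) ≤ c * g ω q then (q:ℝ) else 0 with hh_def
  set T : Ω → ℝ := fun ω => ⨆ q : ℚ, h ω q with hT_def
  have hh0 : ∀ ω q, 0 ≤ h ω q := by
    intro ω q
    simp only [hh_def]
    split
    · exact (by assumption : _ ∧ _).1
    · exact le_refl 0
  have hh1 : ∀ ω q, h ω q ≤ 1 := by
    intro ω q
    simp only [hh_def]
    split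
    · exact (by assumption : _ ∧ _ ∧ _).2.1
    · exact zero_le_one
  have hbdd : ∀ ω, BddAbove (Set.range (h ω)) := by
    intro ω
    exact ⟨1, by rintro x ⟨q, rfl⟩; exact hh1 ω q⟩
  have hT0 : ∀ ω, 0 ≤ T ω := fun ω => le_ciSup_of_le (hbdd ω) 0 (hh0 ω 0)
  have hT1 : ∀ ω, T ω ≤ 1 := fun ω => ciSup_le (hh1 ω)
  -- on the event, u ≤ T
  have huT : ∀ ω, u ω ≤ c * g ω (u ω) → u ω ≤ T ω := by
    intro ω hev
    refine le_of_forall_lt fun x hx => ?_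
    rcases lt_or_ge x 0 with hx0 | hx0
    · exact hx0.trans_le (hT0 ω)
    · obtain ⟨q, hq1, hq2⟩ := exists_rat_btwn hx
      have hq0 : 0 ≤ (q:ℝ) := hx0.trans hq1.le
      have hqu : (q:ℝ) ≤ u ω := hq2.le
      have hq1' : (q:ℝ) ≤ 1 := hqu.trans (hu1 ω)
      have hqg : (q:ℝ) ≤ c * g ω q := by
        have : g ω (u ω) ≤ g ω q := hg ω hqu
        have : c * g ω (u ω) ≤ c * g ω q := mul_le_mul_of_nonneg_left this hc.le
        linarith
      have : h ω q = (q:ℝ) := by simp only [hh_def]; rw [if_pos ⟨hq0, hq1', hqg⟩]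
      calc x < (q:ℝ) := hq1
        _ = h ω q := this.symm
        _ ≤ T ω := le_ciSup (hbdd ω) q
  -- on the event, T ≤ c·g(u)
  have hTc : ∀ ω, u ω ≤ c * g ω (u ω) → T ω ≤ c * g ω (u ω) := by
    intro ω hev
    refine ciSup_le fun q => ?_
    simp only [hh_def]
    split
    · rename_i hcond
      obtain ⟨hq0, hq1', hqg⟩ := hcond
      rcases le_or_gt (q:ℝ) (u ω) with hle | hlt
      · exact hle.trans hev
      · have : g ω q ≤ g ω (u ω) := hg ω hlt.le
        have : c * g ω q ≤ c * g ω (u ω) := mul_le_mul_of_nonneg_left this hc.le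
        linarith
    · have := hg1 ω
      nlinarith
  -- measurability of level sets of T
  have hhmeas : ∀ q : ℚ, Measurable[𝔉] fun ω => h ω q := by
    intro q
    simp only [hh_def]
    by_cases hq : 0 ≤ (q:ℝ) ∧ (q:ℝ) ≤ 1
    · have hset : MeasurableSet[𝔉] {ω | (q:ℝ) ≤ c * g ω q} :=
        measurableSet_le measurable_const ((hgmeas q).const_mul c)
      have : (fun ω => if 0 ≤ (q:ℝ) ∧ (q:ℝ) ≤ 1 ∧ (q:ℝ) ≤ c * g ω q then (q:ℝ) else 0)
          = fun ω => if (q:ℝ) ≤ c * g ω q then (q:ℝ) else 0 := by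
        funext ω
        by_cases hg' : (q:ℝ) ≤ c * g ω q <;> simp [hq.1, hq.2, hg']
      rw [this]
      exact Measurable.ite hset measurable_const measurable_const
    · have : (fun ω => if 0 ≤ (q:ℝ) ∧ (q:ℝ) ≤ 1 ∧ (q:ℝ) ≤ c * g ω q then (q:ℝ) else 0)
          = fun _ => (0:ℝ) := by
        funext ω
        rw [if_neg]
        intro hcond
        exact hq ⟨hcond.1, hcond.2.1⟩
      rw [this]
      exact measurable_const
  have hTle : ∀ a : ℝ, MeasurableSet[𝔉] {ω | T ω ≤ a} := by
    intro a
    have : {ω | T ω ≤ a} = ⋂ q : ℚ, {ω | h ω q ≤ a} := by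
      ext ω
      simp only [Set.mem_setOf_eq, Set.mem_iInter, hT_def]
      exact ciSup_le_iff (hbdd ω)
    rw [this]
    exact MeasurableSet.iInter fun q => (hhmeas q) measurableSet_Iic
  set A : ℕ → Set Ω := fun k => {ω | δ ^ (k+1) < T ω} ∩ {ω | T ω ≤ δ ^ k} with hA_def
  have hA𝔉 : ∀ k, MeasurableSet[𝔉] (A k) := by
    intro k
    refine MeasurableSet.inter ?_ (hTle _)
    have : {ω | δ ^ (k+1) < T ω} = {ω | T ω ≤ δ ^ (k+1)}ᶜ := by
      ext ω; simp [not_le]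
    rw [this]
    exact (hTle _).compl
  have hAm : ∀ k, MeasurableSet[mΩ] (A k) := fun k => h𝔉 _ (hA𝔉 k)
  set B : Set Ω := {ω | T ω ≤ 0} with hB_def
  have hB𝔉 : MeasurableSet[𝔉] B := hTle 0
  have hBm : MeasurableSet[mΩ] B := h𝔉 _ hB𝔉
  -- pointwise bound
  have key : ∀ ω, ENNReal.ofReal (if u ω ≤ c * g ω (u ω) then 1 / g ω (u ω) else 0)
      ≤ (∑' k : ℕ, ENNReal.ofReal (c / δ ^ (k+1)) *
          (({ω | u ω ≤ δ ^ k} ∩ A k).indicator (fun _ => (1:ℝ≥0∞)) ω))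
        + ({ω | u ω ≤ 0} ∩ B).indicator (fun _ => (1:ℝ≥0∞)) ω := by
    intro ω
    by_cases hev : u ω ≤ c * g ω (u ω)
    · rw [if_pos hev]
      have hg0 : 0 < g ω (u ω) := zero_lt_one.trans_le (hg1 ω)
      by_cases hT : T ω ≤ 0
      · have huz : u ω ≤ 0 := (huT ω hev).trans hT
        have hmem : ω ∈ {ω | u ω ≤ 0} ∩ B := ⟨huz, hT⟩
        rw [Set.indicator_of_mem hmem]
        refine le_add_left ?_
        refine ENNReal.ofReal_le_one.2 ?_
        rw [div_le_one hg0]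
        exact hg1 ω
      · push_neg at hT
        have hex : ∃ n, δ ^ n < T ω := exists_pow_lt_of_lt_one hT hδ1
        set n := Nat.find hex with hn_def
        have hn_spec : δ ^ n < T ω := Nat.find_spec hex
        have hn_pos : 0 < n := by
          rcases Nat.eq_zero_or_pos n with h0 | h0
          · exfalso
            rw [h0] at hn_spec
            simp only [pow_zero] at hn_spec
            exact absurd hn_spec (not_lt.2 (hT1 ω))
          · exact h0
        set k := n - 1 with hk_def
        have hkn : k + 1 = n := Nat.succ_pred_eq_of_pos hn_pos
        have hk1 : δ ^ (k+1) < T ω := by rw [hkn]; exact hn_spec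
        have hk2 : T ω ≤ δ ^ k := by
          by_contra hcon
          push_neg at hcon
          exact absurd (Nat.find_min hex (by omega : k < n)) (by simp [hcon])
        have hmemA : ω ∈ A k := ⟨hk1, hk2⟩
        have hmemU : ω ∈ {ω | u ω ≤ δ ^ k} := (huT ω hev).trans hk2
        have hmem : ω ∈ {ω | u ω ≤ δ ^ k} ∩ A k := ⟨hmemU, hmemA⟩
        refine le_add_right ?_
        refine le_trans ?_ (ENNReal.le_tsum k)
        rw [Set.indicator_of_mem hmem, mul_one]
        refine ENNReal.ofReal_le_ofReal ?_
        have hdk : (0:ℝ) < δ ^ (k+1) := pow_pos hδ0 _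
        rw [div_le_div_iff₀ hg0 hdk]
        have hTgc : T ω ≤ c * g ω (u ω) := hTc ω hev
        nlinarith
    · rw [if_neg hev]
      simp
  -- integrate
  calc ∫⁻ ω, ENNReal.ofReal (if u ω ≤ c * g ω (u ω) then 1 / g ω (u ω) else 0) ∂μ
      ≤ ∫⁻ ω, ((∑' k : ℕ, ENNReal.ofReal (c / δ ^ (k+1)) *
          (({ω | u ω ≤ δ ^ k} ∩ A k).indicator (fun _ => (1:ℝ≥0∞)) ω))
        + ({ω | u ω ≤ 0} ∩ B).indicator (fun _ => (1:ℝ≥0∞)) ω) ∂μ :=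
        lintegral_mono key
    _ = (∫⁻ ω, (∑' k : ℕ, ENNReal.ofReal (c / δ ^ (k+1)) *
          (({ω | u ω ≤ δ ^ k} ∩ A k).indicator (fun _ => (1:ℝ≥0∞)) ω)) ∂μ)
        + ∫⁻ ω, ({ω | u ω ≤ 0} ∩ B).indicator (fun _ => (1:ℝ≥0∞)) ω ∂μ := by
        refine lintegral_add_right _ ?_
        exact measurable_const.indicator ((measurableSet_le hu measurable_const).inter hBm)
    _ ≤ ENNReal.ofReal (c / δ) := by
        have hSm : ∀ k : ℕ, MeasurableSet[mΩ] ({ω | u ω ≤ δ ^ k} ∩ A k) := fun k =>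
          (measurableSet_le hu measurable_const).inter (hAm k)
        rw [lintegral_tsum (f := fun k ω => ENNReal.ofReal (c / δ ^ (k+1)) *
          (({ω | u ω ≤ δ ^ k} ∩ A k).indicator (fun _ => (1:ℝ≥0∞)) ω)) (fun k => (measurable_const.mul
          (measurable_const.indicator (hSm k))).aemeasurable)]
        have hterm : ∀ k : ℕ, (∫⁻ ω, ENNReal.ofReal (c / δ ^ (k+1)) *
            (({ω | u ω ≤ δ ^ k} ∩ A k).indicator (fun _ => (1:ℝ≥0∞)) ω) ∂μ)
            = ENNReal.ofReal (c / δ ^ (k+1)) * μ ({ω | u ω ≤ δ ^ k} ∩ A k) := by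
          intro k
          rw [lintegral_const_mul _ (measurable_const.indicator (hSm k)),
            lintegral_indicator_const (hSm k) 1, one_mul]
        have hB0 : (∫⁻ ω, ({ω | u ω ≤ 0} ∩ B).indicator (fun _ => (1:ℝ≥0∞)) ω ∂μ) = 0 := by
          rw [lintegral_indicator_const ((measurableSet_le hu measurable_const).inter hBm) 1, one_mul]
          have := hsup 0 ⟨le_refl 0, zero_le_one⟩ B hB𝔉
          simpa using le_antisymm (by simpa using this) zero_le
        rw [hB0, add_zero]
        have hμk : ∀ k : ℕ, μ ({ω | u ω ≤ δ ^ k} ∩ A k) ≤ ENNReal.ofReal (δ ^ k) * μ (A k) :=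
          fun k => hsup (δ ^ k) ⟨pow_nonneg hδ0.le _, pow_le_one₀ hδ0.le hδ1.le⟩ (A k) (hA𝔉 k)
        calc (∑' k : ℕ, ∫⁻ ω, ENNReal.ofReal (c / δ ^ (k+1)) *
              (({ω | u ω ≤ δ ^ k} ∩ A k).indicator (fun _ => (1:ℝ≥0∞)) ω) ∂μ)
            = ∑' k : ℕ, ENNReal.ofReal (c / δ ^ (k+1)) * μ ({ω | u ω ≤ δ ^ k} ∩ A k) := by
              exact tsum_congr hterm
          _ ≤ ∑' k : ℕ, ENNReal.ofReal (c / δ) * μ (A k) := by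
              refine ENNReal.tsum_le_tsum fun k => ?_
              calc ENNReal.ofReal (c / δ ^ (k+1)) * μ ({ω | u ω ≤ δ ^ k} ∩ A k)
                  ≤ ENNReal.ofReal (c / δ ^ (k+1)) * (ENNReal.ofReal (δ ^ k) * μ (A k)) :=
                    mul_le_mul_right (hμk k) _
                _ = ENNReal.ofReal (c / δ) * μ (A k) := by
                    rw [← mul_assoc, ← ENNReal.ofReal_mul (by positivity)]
                    congr 2
                    have hd : (δ:ℝ) ^ (k+1) ≠ 0 := (pow_pos hδ0 _).ne'
                    field_simp
                    ring
          _ = ENNReal.ofReal (c / δ) * ∑' k : ℕ, μ (A k) := ENNReal.tsum_mul_left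
          _ ≤ ENNReal.ofReal (c / δ) * 1 := by
              refine mul_le_mul_right ?_ _
              have hmono : ∀ k l : ℕ, k < l → Disjoint (A k) (A l) := by
                intro k l hlt
                refine Set.disjoint_left.2 fun ω hωk hωl => ?_
                have h1 : δ ^ (k+1) < T ω := hωk.1
                have h2 : T ω ≤ δ ^ l := hωl.2
                have h3 : δ ^ l ≤ δ ^ (k+1) :=
                  pow_le_pow_of_le_one hδ0.le hδ1.le (by omega)
                linarith
              have hdisj : Pairwise (Function.onFun Disjoint A) := by
                intro k l hkl
                rcases hkl.lt_or_gt with hlt | hlt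
                · exact hmono k l hlt
                · exact (hmono l k hlt).symm
              rw [← measure_iUnion hdisj hAm]
              exact prob_le_one
          _ = ENNReal.ofReal (c / δ) := mul_one _

/-- Core FCR inequality: for `m` indices with conditionally super-uniform p-values `U_i`
(given sub-σ-fields `𝔉 i` generated by `W_i`) and selection sizes `V_i ≥ 1` that are
nonincreasing functions of `U_i` measurable with respect to `𝔉 i`, one has
`E[ Σ_i 1{U_i ≤ α·V_i/m}/V_i ] ≤ α` for any `α ∈ (0,1)`. -/
theorem stmt_10 {Ω : Type*} [mΩ : MeasurableSpace Ω] (μ : Measure Ω) [IsProbabilityMeasure μ]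
    (m : ℕ) (hm : 1 ≤ m) (α : ℝ) (hα : α ∈ Set.Ioo (0 : ℝ) 1)
    (U V : Fin m → Ω → ℝ)
    (hUmeas : ∀ i, Measurable (U i)) (hVmeas : ∀ i, Measurable (V i))
    (hU01 : ∀ i ω, U i ω ∈ Set.Icc (0 : ℝ) 1) (hV1 : ∀ i ω, 1 ≤ V i ω)
    (𝔉 : Fin m → MeasurableSpace Ω) (h𝔉 : ∀ i, 𝔉 i ≤ mΩ)
    (hsup : ∀ i, ∀ t ∈ Set.Icc (0 : ℝ) 1, ∀ A : Set Ω, MeasurableSet[𝔉 i] A →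
      μ ({ω | U i ω ≤ t} ∩ A) ≤ ENNReal.ofReal t * μ A)
    (G : Fin m → Ω → ℝ → ℝ)
    (hGanti : ∀ i ω, Antitone (G i ω))
    (hGmeas : ∀ i (u : ℝ), Measurable[𝔉 i] fun ω => G i ω u)
    (hVG : ∀ i ω, V i ω = G i ω (U i ω)) :
    ∫ ω, (∑ i : Fin m, if U i ω ≤ α * V i ω / m then 1 / V i ω else 0) ∂μ ≤ α := by
  classical
  have hm0 : (0:ℝ) < m := by exact_mod_cast hm
  set c : ℝ := α / m with hc_def
  have hc : 0 < c := div_pos hα.1 hm0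
  set f : Fin m → Ω → ℝ := fun i ω => if U i ω ≤ α * V i ω / m then 1 / V i ω else 0 with hf_def
  have hfmeas : ∀ i, Measurable (f i) := by
    intro i
    exact Measurable.ite
      (measurableSet_le (hUmeas i) (((hVmeas i).const_mul α).div_const m))
      (measurable_const.div (hVmeas i)) measurable_const
  have hf0 : ∀ i ω, 0 ≤ f i ω := by
    intro i ω
    simp only [hf_def]
    split
    · have := hV1 i ω; positivity
    · exact le_refl 0
  have hf1 : ∀ i ω, f i ω ≤ 1 := by
    intro i ω
    simp only [hf_def]
    split
    · rw [div_le_one (zero_lt_one.trans_le (hV1 i ω))]; exact hV1 i ω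
    · exact zero_le_one
  have hint : ∀ i, Integrable (f i) μ := by
    intro i
    refine Integrable.mono' (integrable_const (1:ℝ)) (hfmeas i).aestronglyMeasurable ?_
    refine Filter.Eventually.of_forall fun ω => ?_
    rw [Real.norm_eq_abs, abs_of_nonneg (hf0 i ω)]
    exact hf1 i ω
  -- key per-index lintegral bound for each δ
  have hkey : ∀ δ : ℝ, 0 < δ → δ < 1 → ∀ i,
      (∫⁻ ω, ENNReal.ofReal (f i ω) ∂μ) ≤ ENNReal.ofReal (c / δ) := by
    intro δ hδ0 hδ1 i
    have heq : ∀ ω, f i ω = if U i ω ≤ c * G i ω (U i ω) then 1 / G i ω (U i ω) else 0 := by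
      intro ω
      simp only [hf_def]
      rw [← hVG i ω]
      congr 1
      rw [hc_def]
      ring_nf
    simp_rw [heq]
    exact fcr_key μ c δ hc hδ0 hδ1 (U i) (hUmeas i) (fun ω => (hU01 i ω).2)
      (𝔉 i) (h𝔉 i) (hsup i) (G i) (hGanti i) (hGmeas i)
      (fun ω => (hVG i ω) ▸ (hV1 i ω))
  -- Bochner integral bound for each δ
  have hInt : ∀ δ : ℝ, 0 < δ → δ < 1 →
      (∫ ω, (∑ i : Fin m, f i ω) ∂μ) ≤ α / δ := by
    intro δ hδ0 hδ1
    rw [integral_finset_sum Finset.univ (fun i _ => hint i)]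
    have hone : ∀ i : Fin m, (∫ ω, f i ω ∂μ) ≤ c / δ := by
      intro i
      rw [integral_eq_lintegral_of_nonneg_ae (Filter.Eventually.of_forall (hf0 i))
        (hfmeas i).aestronglyMeasurable]
      have := hkey δ hδ0 hδ1 i
      calc (∫⁻ ω, ENNReal.ofReal (f i ω) ∂μ).toReal
          ≤ (ENNReal.ofReal (c / δ)).toReal :=
            ENNReal.toReal_mono ENNReal.ofReal_ne_top this
        _ = c / δ := ENNReal.toReal_ofReal (by positivity)
    calc (∑ i : Fin m, ∫ ω, f i ω ∂μ) ≤ ∑ _i : Fin m, c / δ :=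
          Finset.sum_le_sum fun i _ => hone i
      _ = m * (c / δ) := by rw [Finset.sum_const]; simp [mul_comm]
      _ = α / δ := by rw [hc_def]; field_simp
  -- take δ → 1
  set I : ℝ := ∫ ω, (∑ i : Fin m, f i ω) ∂μ with hI_def
  show I ≤ α
  by_contra hcon
  push_neg at hcon
  have hI0 : 0 < I := hα.1.trans hcon
  have h1 : α / I < 1 := (div_lt_one hI0).2 hcon
  obtain ⟨δ, hδ1, hδ2⟩ := exists_between h1
  have hδ0 : 0 < δ := lt_trans (div_pos hα.1 hI0) hδ1
  have := hInt δ hδ0 hδ2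
  have h2 : α / δ < α / (α / I) := div_lt_div_of_pos_left hα.1 (div_pos hα.1 hI0) hδ1
  have h3 : α / (α / I) = I := by
    rw [div_div_eq_mul_div, mul_comm, mul_div_assoc, div_self hα.1.ne', mul_one]
  linarith
end

section
/- In the setting of full-calibrated conformal p-values, the leave-one-out p-value vector p̄_{−i} = (p̄_j^(y))_{j≠i, y∈Y} can be written as Ψ(p̄_i^{(Y_{n+i})}, W_i), where W_i = (A_i, (S_y(X_{n+j}))_{j≠i, y∈Y}), A_i = {S_{Y_j}(X_j) : j∈[n]} ∪ {S_{Y_{n+i}}(X_{n+i})} = {a_{i,(1)} > … > a_{i,(n+1)}}, and Ψ(u, W_i) has (j,y)-coordinate (1/(n+1))·(1{a_{i,(⌈u(n+1)⌉)} < S_y(X_{n+j})} + Σ_{s∈A_i} 1{s ≥ S_y(X_{n+j})}). Moreover u ↦ Ψ(u, W_i) is coordinate-wise nondecreasing. -/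
noncomputable section

/-- The `ℓ`-th largest element of the finite set `A` (`a_{(1)} > a_{(2)} > …`). -/
def aDesc (A : Finset ℝ) (ℓ : ℕ) : ℝ :=
  ((A.sort (· ≤ ·)).reverse).getD (ℓ - 1) 0

/-- The map `Ψ(u, W_i)` in its `(j,y)`-coordinate: with `A = A_i` and
`tsc = S_y(X_{n+j})`, it equals
`(1/(n+1))·(1{a_{(⌈u(n+1)⌉)} < S_y(X_{n+j})} + Σ_{s∈A} 1{s ≥ S_y(X_{n+j})})`. -/
def psiMap (n : ℕ) (A : Finset ℝ) (tsc : ℝ) (u : ℝ) : ℝ :=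
  ((if aDesc A ⌈u * (n + 1)⌉₊ < tsc then (1 : ℝ) else 0)
    + ((A.filter fun s => tsc ≤ s).card : ℝ)) / (n + 1)

lemma aDesc_antitone (A : Finset ℝ) {k l : ℕ} (hk : 1 ≤ k) (hkl : k ≤ l) (hl : l ≤ A.card) :
    aDesc A l ≤ aDesc A k := by
  have hlen : (A.sort (· ≤ ·)).length = A.card := Finset.length_sort _
  have hl' : l - 1 < (A.sort (· ≤ ·)).reverse.length := by
    simp [hlen]; omega
  have hk' : k - 1 < (A.sort (· ≤ ·)).reverse.length := by
    simp [hlen]; omega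
  rw [aDesc, aDesc, List.getD_eq_getElem _ _ hl', List.getD_eq_getElem _ _ hk',
    List.getElem_reverse, List.getElem_reverse]
  have hs := A.pairwise_sort (· ≤ ·)
  exact hs.rel_get_of_le (a := ⟨_, by simp at hl' ⊢; omega⟩) (b := ⟨_, by simp at hk' ⊢; omega⟩)
    (by simp [hlen]; omega)

lemma aDesc_rank (A : Finset ℝ) {a : ℝ} (ha : a ∈ A) :
    aDesc A ((A.filter fun b => a < b).card + 1) = a := by
  set N := A.card with hN
  have hmem : ∀ b, b ∈ A ↔ ∃ p : Fin N, A.orderEmbOfFin (k := N) rfl p = b := by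
    intro b
    constructor
    · intro hb
      have : b ∈ (↑A : Set ℝ) := hb
      rw [← Finset.range_orderEmbOfFin A (k := N) rfl] at this
      exact this
    · rintro ⟨p, rfl⟩; exact Finset.orderEmbOfFin_mem _ _ _
  obtain ⟨j, hj⟩ := (hmem a).1 ha
  have hsm := (A.orderEmbOfFin (k := N) rfl).strictMono
  have hfilt : (A.filter fun b => a < b) =
      Finset.image (A.orderEmbOfFin (k := N) rfl) (Finset.univ.filter fun p => j < p) := by
    ext b
    simp only [Finset.mem_filter, Finset.mem_image, Finset.mem_univ, true_and]
    constructor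
    · rintro ⟨hb, hab⟩
      obtain ⟨p, rfl⟩ := (hmem b).1 hb
      exact ⟨p, by rw [← hj] at hab; exact hsm.lt_iff_lt.1 hab, rfl⟩
    · rintro ⟨p, hp, rfl⟩
      exact ⟨(hmem _).2 ⟨p, rfl⟩, by rw [← hj]; exact hsm hp⟩
  have hcard : (A.filter fun b => a < b).card = N - 1 - j := by
    rw [hfilt, Finset.card_image_of_injective _ hsm.injective]
    have : (Finset.univ.filter fun p => j < p) = Finset.Ioi j := by
      ext p; simp
    rw [this, Fin.card_Ioi]
  have hlen : (A.sort (· ≤ ·)).length = N := Finset.length_sort _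
  have hjN : (j : ℕ) < N := j.2
  have hidx : (N - 1 - (j : ℕ)) + 1 - 1 < (A.sort (· ≤ ·)).reverse.length := by
    simp [hlen]; omega
  rw [aDesc, hcard, List.getD_eq_getElem _ _ hidx, List.getElem_reverse]
  rw [← hj, Finset.orderEmbOfFin_apply]
  congr 1
  simp [hlen]; omega

/-- Leave-one-out representation of full-calibrated conformal p-values: with calibration
scores `c`, test score functions `T`, and untied score `s* = S_{Y_{n+i}}(X_{n+i})`, the
p-values `p̄_j^{(y)}` of the other test points equal `Ψ(p̄_i^{(Y_{n+i})}, W_i)`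
coordinate-wise, and `u ↦ Ψ(u, W_i)` is coordinate-wise nondecreasing on `(0,1]`. -/
theorem stmt_15 {Y : Type*} (n m : ℕ) (c : Fin n → ℝ) (T : Fin m → Y → ℝ) (i : Fin m)
    (sstar : ℝ) (hinj : Function.Injective c) (hnot : sstar ∉ Set.range c) :
    (∀ j : Fin m, j ≠ i → ∀ y : Y,
        (1 + ((Finset.univ.filter fun k => T j y ≤ c k).card : ℝ)) / (n + 1)
          = psiMap n ((Finset.univ.image c) ∪ {sstar}) (T j y)
              ((1 + ((Finset.univ.filter fun k => sstar ≤ c k).card : ℝ)) / (n + 1)))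
    ∧ (∀ tsc : ℝ,
        MonotoneOn (fun u => psiMap n ((Finset.univ.image c) ∪ {sstar}) tsc u)
          (Set.Ioc (0 : ℝ) 1)) := by
  set A : Finset ℝ := (Finset.univ.image c) ∪ {sstar} with hA
  have hnotim : sstar ∉ Finset.univ.image c := by
    simp only [Finset.mem_image, Finset.mem_univ, true_and]
    rintro ⟨k, hk⟩; exact hnot ⟨k, hk⟩
  have hne : ∀ k, c k ≠ sstar := fun k h => hnot ⟨k, h⟩
  have hcardA : A.card = n + 1 := by
    rw [hA, Finset.card_union_of_disjoint (by simp [hnotim]),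
      Finset.card_image_of_injective _ hinj]
    simp
  -- counting lemma
  have hcount : ∀ (P : ℝ → Prop) [DecidablePred P],
      (A.filter P).card = (Finset.univ.filter fun k => P (c k)).card
        + (if P sstar then 1 else 0) := by
    intro P _
    rw [hA, Finset.filter_union, Finset.card_union_of_disjoint, Finset.filter_singleton]
    · congr 1
      · rw [Finset.filter_image, Finset.card_image_of_injective _ hinj]
      · split <;> simp
    · refine Finset.disjoint_left.2 fun x hx hx' => ?_
      rw [Finset.filter_singleton] at hx'
      rcases Finset.mem_filter.1 hx with ⟨hx, _⟩
      split at hx' <;> simp at hx'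
      exact hnotim (hx' ▸ hx)
  have hnpos : (0 : ℝ) < (n : ℝ) + 1 := by positivity
  constructor
  · intro j _ y
    set K := (Finset.univ.filter fun k => sstar ≤ c k).card with hK
    have hu : (1 + (K : ℝ)) / (n + 1) * (n + 1) = ((1 + K : ℕ) : ℝ) := by
      push_cast; field_simp
    have hceil : ⌈(1 + (K : ℝ)) / (n + 1) * (n + 1)⌉₊ = 1 + K := by
      rw [hu, Nat.ceil_natCast]
    have hrank : (A.filter fun b => sstar < b).card = K := by
      rw [hcount]
      rw [if_neg (lt_irrefl sstar), add_zero]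
      congr 1
      apply Finset.filter_congr
      intro k _
      exact ⟨le_of_lt, fun h => lt_of_le_of_ne h (Ne.symm (hne k))⟩
    have hstar : aDesc A (1 + K) = sstar := by
      have := aDesc_rank A (a := sstar) (by simp [hA])
      rwa [hrank, add_comm] at this
    rw [psiMap, hceil, hstar, hcount]
    rcases le_or_gt (T j y) sstar with h | h
    · rw [if_neg (not_lt.2 h), if_pos h]
      push_cast; ring
    · rw [if_pos h, if_neg (not_le.2 h)]
      push_cast; ring
  · intro tsc u hu v hv huv
    simp only [psiMap]
    gcongr (?_ + _) / _
    split
    · rename_i h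
      rw [if_pos]
      refine lt_of_le_of_lt ?_ h
      apply aDesc_antitone
      · rw [Nat.one_le_iff_ne_zero, ← Nat.pos_iff_ne_zero, Nat.ceil_pos]
        exact mul_pos hu.1 hnpos
      · exact Nat.ceil_le_ceil (by nlinarith [hu.1, hv.1, huv])
      · rw [hcardA, Nat.ceil_le]
        push_cast
        nlinarith [hv.2]
    · split <;> norm_num


end
end

section
/- In the regression setting with locally weighted score S_y(x) = |y − μ(x)|/σ(x) (σ(x) > 0), for the informative collection I = {intervals I : |I| ≤ 2λ_0}, the adjusted p-value equals q_i = (1/(n+1))·(1 + Σ_{j=1}^n 1{S_{Y_j}(X_j) > λ_0/σ(X_{n+i})}), i.e., C^α_{n+i} := {y : p̄_i^(y) > α} is an interval of length ≤ 2λ_0 if and only if α ≥ q_i. -/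
noncomputable section

/-- Length-restricted prediction intervals in regression with the locally weighted score
`S_y(x) = |y − μ(x)|/σ(x)`: the prediction set `C^α = {y : p̄^(y) > α}` is an interval
(ord-connected set), and it has length (diameter) at most `2λ₀` if and only if `α ≥ q`,
where `q = (1 + #{j : S_{Y_j}(X_j) > λ₀/σ(x)})/(n+1)` is the `I`-adjusted p-value. -/
theorem stmt_17 {𝒳 : Type*} (n : ℕ) (μp σp : 𝒳 → ℝ) (hσ : ∀ x, 0 < σp x)
    (Xc : Fin n → 𝒳) (Yc : Fin n → ℝ) (x : 𝒳) (lam0 : ℝ) (hlam : 0 < lam0)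
    (hties : Function.Injective fun j : Fin n => |Yc j - μp (Xc j)| / σp (Xc j)) :
    ∀ α : ℝ,
      Set.OrdConnected {y : ℝ | α <
          (1 + ((Finset.univ.filter fun j : Fin n =>
            |y - μp x| / σp x ≤ |Yc j - μp (Xc j)| / σp (Xc j)).card : ℝ)) / (n + 1)}
      ∧ (EMetric.diam {y : ℝ | α <
            (1 + ((Finset.univ.filter fun j : Fin n =>
              |y - μp x| / σp x ≤ |Yc j - μp (Xc j)| / σp (Xc j)).card : ℝ)) / (n + 1)}
            ≤ ENNReal.ofReal (2 * lam0)
          ↔ (1 + ((Finset.univ.filter fun j : Fin n =>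
              lam0 / σp x < |Yc j - μp (Xc j)| / σp (Xc j)).card : ℝ)) / (n + 1) ≤ α) := by
  intro α
  have hσx : (0:ℝ) < σp x := hσ x
  set S : Fin n → ℝ := fun j => |Yc j - μp (Xc j)| / σp (Xc j) with hSdef
  have hn1 : (0:ℝ) < (n:ℝ) + 1 := by positivity
  -- monotonicity lemma: if |a - μ| ≤ |b - μ| and b is in the set, then a is
  have mono : ∀ a b : ℝ, |a - μp x| ≤ |b - μp x| →
      α < (1 + ((Finset.univ.filter fun j : Fin n =>
            |b - μp x| / σp x ≤ S j).card : ℝ)) / (n + 1) →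
      α < (1 + ((Finset.univ.filter fun j : Fin n =>
            |a - μp x| / σp x ≤ S j).card : ℝ)) / (n + 1) := by
    intro a b hab hb
    refine lt_of_lt_of_le hb ?_
    have hsub : (Finset.univ.filter fun j : Fin n => |b - μp x| / σp x ≤ S j) ⊆
        (Finset.univ.filter fun j : Fin n => |a - μp x| / σp x ≤ S j) := by
      intro j hj
      simp only [Finset.mem_filter, Finset.mem_univ, true_and] at hj ⊢
      exact le_trans (by gcongr) hj
    have hc : (((Finset.univ.filter fun j : Fin n => |b - μp x| / σp x ≤ S j).card : ℕ) : ℝ) ≤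
        ((Finset.univ.filter fun j : Fin n => |a - μp x| / σp x ≤ S j).card : ℕ) := by
      exact_mod_cast Finset.card_le_card hsub
    gcongr
  refine ⟨⟨?_⟩, ?_, ?_⟩
  · intro y1 hy1 y2 hy2 y hy
    simp only [Set.mem_setOf_eq] at hy1 hy2 ⊢
    rcases le_total y (μp x) with h | h
    · refine mono y y1 ?_ hy1
      have h1 : y1 ≤ y := hy.1
      rw [abs_sub_comm, abs_of_nonneg (by linarith)]
      calc μp x - y ≤ μp x - y1 := by linarith
        _ ≤ |y1 - μp x| := by rw [abs_sub_comm]; exact le_abs_self _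
    · refine mono y y2 ?_ hy2
      have h2 : y ≤ y2 := hy.2
      rw [abs_of_nonneg (by linarith)]
      calc y - μp x ≤ y2 - μp x := by linarith
        _ ≤ |y2 - μp x| := le_abs_self _
  · -- diam ≤ 2λ₀ → q ≤ α
    intro hdiam
    by_contra hq
    push_neg at hq
    -- find r > lam0/σ with all j having S j > lam0/σ satisfying r ≤ S j
    set F := Finset.univ.filter fun j : Fin n => lam0 / σp x < S j with hF
    have ht0 : (0:ℝ) < lam0 / σp x := div_pos hlam hσx
    obtain ⟨r, hr, hrle⟩ : ∃ r : ℝ, lam0 / σp x < r ∧ ∀ j ∈ F, r ≤ S j := by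
      rcases F.eq_empty_or_nonempty with he | hne
      · exact ⟨2 * (lam0 / σp x), by linarith, by simp [he]⟩
      · obtain ⟨j0, hj0, hmin⟩ := F.exists_min_image S hne
        refine ⟨S j0, ?_, hmin⟩
        have := hj0
        simp only [hF, Finset.mem_filter, Finset.mem_univ, true_and] at this
        exact this
    have hrpos : (0:ℝ) < r := lt_trans ht0 hr
    -- the two points μ ± σ r are in the set
    have hmem : ∀ ε : ℝ, |ε| = σp x * r →
        α < (1 + ((Finset.univ.filter fun j : Fin n =>
            |(μp x + ε) - μp x| / σp x ≤ S j).card : ℝ)) / (n + 1) := by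
      intro ε hε
      have habs : |(μp x + ε) - μp x| / σp x = r := by
        rw [show (μp x + ε) - μp x = ε by ring, hε]
        field_simp
      refine lt_of_lt_of_le hq ?_
      have hsub : F ⊆ (Finset.univ.filter fun j : Fin n =>
          |(μp x + ε) - μp x| / σp x ≤ S j) := by
        intro j hj
        simp only [Finset.mem_filter, Finset.mem_univ, true_and, habs]
        exact hrle j hj
      have hc : ((F.card : ℕ) : ℝ) ≤ ((Finset.univ.filter fun j : Fin n =>
          |(μp x + ε) - μp x| / σp x ≤ S j).card : ℕ) := by
        exact_mod_cast Finset.card_le_card hsub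
      gcongr
    have h1 := hmem (σp x * r) (by rw [abs_of_pos (by positivity)])
    have h2 := hmem (-(σp x * r)) (by rw [abs_neg, abs_of_pos (by positivity)])
    have hm1 : (μp x + σp x * r) ∈ {y : ℝ | α < (1 + ((Finset.univ.filter fun j : Fin n =>
        |y - μp x| / σp x ≤ S j).card : ℝ)) / (n + 1)} := h1
    have hm2 : (μp x + -(σp x * r)) ∈ {y : ℝ | α < (1 + ((Finset.univ.filter fun j : Fin n =>
        |y - μp x| / σp x ≤ S j).card : ℝ)) / (n + 1)} := h2
    have hedist := EMetric.edist_le_diam_of_mem hm1 hm2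
    have hedist2 : edist (μp x + σp x * r) (μp x + -(σp x * r)) =
        ENNReal.ofReal (2 * (σp x * r)) := by
      rw [edist_dist, Real.dist_eq]
      congr 1
      rw [abs_of_pos (by ring_nf; positivity)]
      ring
    rw [hedist2] at hedist
    have hlt : ENNReal.ofReal (2 * lam0) < ENNReal.ofReal (2 * (σp x * r)) := by
      have h3 : lam0 < σp x * r := by
        have := (div_lt_iff₀ hσx).mp hr
        linarith
      exact (ENNReal.ofReal_lt_ofReal_iff (by linarith)).mpr (by linarith)
    exact absurd (le_trans hedist hdiam) (not_le.mpr hlt)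
  · -- q ≤ α → diam ≤ 2λ₀
    intro hq
    have hsub : {y : ℝ | α <
        (1 + ((Finset.univ.filter fun j : Fin n =>
          |y - μp x| / σp x ≤ S j).card : ℝ)) / (n + 1)} ⊆
        Set.Icc (μp x - lam0) (μp x + lam0) := by
      intro y hy
      simp only [Set.mem_setOf_eq] at hy
      by_contra hyo
      have hfar : lam0 < |y - μp x| := by
        simp only [Set.mem_Icc, not_and_or, not_le] at hyo
        rcases hyo with h | h
        · rw [abs_sub_comm, abs_of_pos (by linarith)]; linarith
        · rw [abs_of_pos (by linarith)]; linarith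
      have hsub2 : (Finset.univ.filter fun j : Fin n => |y - μp x| / σp x ≤ S j) ⊆
          (Finset.univ.filter fun j : Fin n => lam0 / σp x < S j) := by
        intro j hj
        simp only [Finset.mem_filter, Finset.mem_univ, true_and] at hj ⊢
        have : lam0 / σp x < |y - μp x| / σp x := by gcongr
        exact lt_of_lt_of_le this hj
      have hcard := Finset.card_le_card hsub2
      have : α < (1 + ((Finset.univ.filter fun j : Fin n =>
          lam0 / σp x < S j).card : ℝ)) / (n + 1) := by
        refine lt_of_lt_of_le hy ?_
        have hc : (((Finset.univ.filter fun j : Fin n => |y - μp x| / σp x ≤ S j).card : ℕ) : ℝ) ≤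
            ((Finset.univ.filter fun j : Fin n => lam0 / σp x < S j).card : ℕ) := by
          exact_mod_cast hcard
        gcongr
      linarith
    calc EMetric.diam _ ≤ EMetric.diam (Set.Icc (μp x - lam0) (μp x + lam0)) :=
          EMetric.diam_mono hsub
      _ = ENNReal.ofReal ((μp x + lam0) - (μp x - lam0)) := Real.ediam_Icc _ _
      _ = ENNReal.ofReal (2 * lam0) := by ring_nf

end
end

section
/- Let U ∈ [0,1] and V ≥ 0 be random variables such that P(U ≤ u) ≤ u for all u ∈ [0,1], and for every r > 0 the map u ↦ P(V < r | U ≤ u) is nondecreasing in u. Then for any c > 0, E[ 1{U ≤ c·V} / V ] ≤ c (with the convention that the ratio is 0 when the indicator is 0). -/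
open MeasureTheory ENNReal NNReal
open scoped ENNReal NNReal

private lemma sum_Icc_telescope (a : ℤ → ℝ) (m : ℤ) (n : ℕ) :
    ∑ k ∈ Finset.Icc m (m + (n : ℤ)), (a k - a (k - 1)) = a (m + n) - a (m - 1) := by
  induction n with
  | zero => simp
  | succ n ih =>
    have h1 : (m + ((n : ℤ) + 1)) = (m + n) + 1 := by ring
    have h2 : Finset.Icc m ((m + (n : ℤ)) + 1)
        = insert ((m + (n : ℤ)) + 1) (Finset.Icc m (m + (n : ℤ))) := by
      ext x
      simp only [Finset.mem_Icc, Finset.mem_insert]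
      omega
    push_cast
    rw [h1, h2, Finset.sum_insert (by simp), ih]
    have h3 : (m + (n : ℤ) + 1) - 1 = m + n := by ring
    rw [h3]
    ring

private lemma tsum_ofReal_diff_le (a : ℤ → ℝ) (h0 : ∀ k, 0 ≤ a k) (h1 : ∀ k, a k ≤ 1)
    (hd : ∀ k, a (k - 1) ≤ a k) :
    ∑' k : ℤ, ENNReal.ofReal (a k - a (k - 1)) ≤ 1 := by
  rw [ENNReal.tsum_eq_iSup_sum]
  apply iSup_le
  intro F
  rcases F.eq_empty_or_nonempty with rfl | hF
  · simp
  · set m := F.min' hF with hm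
    set M := F.max' hF with hM
    have hmM : m ≤ M := F.min'_le M (F.max'_mem hF)
    have hsub : F ⊆ Finset.Icc m M := fun k hk =>
      Finset.mem_Icc.2 ⟨F.min'_le k hk, F.le_max' k hk⟩
    calc ∑ k ∈ F, ENNReal.ofReal (a k - a (k - 1))
        ≤ ∑ k ∈ Finset.Icc m M, ENNReal.ofReal (a k - a (k - 1)) :=
          Finset.sum_le_sum_of_subset hsub
      _ = ENNReal.ofReal (∑ k ∈ Finset.Icc m M, (a k - a (k - 1))) := by
          rw [ENNReal.ofReal_sum_of_nonneg (fun k _ => by linarith [hd k])]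
      _ ≤ 1 := by
          obtain ⟨n, hn⟩ : ∃ n : ℕ, M = m + (n : ℤ) := ⟨(M - m).toNat, by omega⟩
          rw [hn, sum_Icc_telescope]
          rw [show (1 : ℝ≥0∞) = ENNReal.ofReal 1 by simp]
          exact ENNReal.ofReal_le_ofReal (by linarith [h1 (m + (n : ℤ)), h0 (m - 1)])

/-- Lemma 3.2 (ii) of Blanchard–Roquain (PRDS-type lemma): if `U ∈ [0,1]` is
super-uniform, `V ≥ 0`, and for every `r > 0` the map `u ↦ P(V < r | U ≤ u)` is
nondecreasing (stated in cross-multiplied form), then for any `c > 0`,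
`E[ 1{U ≤ c·V} / V ] ≤ c`. -/
theorem stmt_19 {Ω : Type*} [MeasurableSpace Ω] (μ : Measure Ω) [IsProbabilityMeasure μ]
    (U V : Ω → ℝ) (hUmeas : Measurable U) (hVmeas : Measurable V)
    (hU01 : ∀ ω, U ω ∈ Set.Icc (0 : ℝ) 1) (hV0 : ∀ ω, 0 ≤ V ω)
    (hsup : ∀ u ∈ Set.Icc (0 : ℝ) 1, μ {ω | U ω ≤ u} ≤ ENNReal.ofReal u)
    (hmono : ∀ r : ℝ, 0 < r → ∀ u u', u ∈ Set.Icc (0 : ℝ) 1 → u' ∈ Set.Icc (0 : ℝ) 1 →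
      u ≤ u' →
      μ ({ω | V ω < r} ∩ {ω | U ω ≤ u}) * μ {ω | U ω ≤ u'}
        ≤ μ ({ω | V ω < r} ∩ {ω | U ω ≤ u'}) * μ {ω | U ω ≤ u})
    (c : ℝ) (hc : 0 < c) :
    ∫ ω, (if U ω ≤ c * V ω then 1 / V ω else 0) ∂μ ≤ c := by
  set f : Ω → ℝ := fun ω => if U ω ≤ c * V ω then 1 / V ω else 0 with hf
  have hfnonneg : ∀ ω, 0 ≤ f ω := by
    intro ω
    simp only [hf]
    split
    · exact one_div_nonneg.2 (hV0 ω)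
    · exact le_refl 0
  have hfmeas : Measurable f :=
    Measurable.ite (measurableSet_le hUmeas (hVmeas.const_mul c))
      (measurable_const.div hVmeas) measurable_const
  -- main bound on the lintegral, for every lam > 1
  have key : ∀ lam : ℝ, 1 < lam →
      ∫⁻ ω, ENNReal.ofReal (f ω) ∂μ ≤ ENNReal.ofReal (lam * c) := by
    intro lam hlam
    have hlam0 : (0 : ℝ) < lam := by linarith
    set u : ℤ → ℝ := fun k => min (c * lam ^ k) 1 with hu
    have hzp : ∀ k : ℤ, (0 : ℝ) < lam ^ k := fun k => zpow_pos hlam0 k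
    have hzmono : ∀ k : ℤ, lam ^ (k - 1) ≤ lam ^ k :=
      fun k => zpow_le_zpow_right₀ hlam.le (by omega)
    have hu_mem : ∀ k, u k ∈ Set.Icc (0 : ℝ) 1 := by
      intro k
      constructor
      · exact le_min (by positivity) zero_le_one
      · exact min_le_right _ _
    have hu_mono : ∀ k, u (k - 1) ≤ u k := by
      intro k
      exact min_le_min (by nlinarith [hzmono k, hzp (k - 1)]) le_rfl
    set Hm : ℤ → ℝ≥0∞ := fun k => μ {ω | U ω ≤ u k} with hHm
    set Gm : ℤ → ℝ≥0∞ := fun k => μ ({ω | V ω < lam ^ k} ∩ {ω | U ω ≤ u k}) with hGm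
    set Gm' : ℤ → ℝ≥0∞ := fun k => μ ({ω | V ω < lam ^ (k - 1)} ∩ {ω | U ω ≤ u k})
      with hGm'
    set a : ℤ → ℝ := fun k => (Gm k).toReal / (Hm k).toReal with ha
    set S : ℤ → Set Ω :=
      fun k => {ω | lam ^ (k - 1) ≤ V ω ∧ V ω < lam ^ k ∧ U ω ≤ u k} with hS
    have hSmeas : ∀ k, MeasurableSet (S k) := by
      intro k
      exact (measurableSet_le measurable_const hVmeas).inter
        ((measurableSet_lt hVmeas measurable_const).inter
          (measurableSet_le hUmeas measurable_const))
    -- basic measure facts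
    have hGH : ∀ k, Gm k ≤ Hm k := fun k => measure_mono Set.inter_subset_right
    have hG'G : ∀ k, Gm' k ≤ Gm k := by
      intro k
      apply measure_mono
      intro ω hω
      exact ⟨lt_of_lt_of_le hω.1 (hzmono k), hω.2⟩
    have hHmono : ∀ k, Hm (k - 1) ≤ Hm k := by
      intro k
      apply measure_mono
      intro ω hω
      exact le_trans hω (hu_mono k)
    have hH_le : ∀ k, (Hm k).toReal ≤ c * lam ^ k := by
      intro k
      have h1 : Hm k ≤ ENNReal.ofReal (u k) := hsup (u k) (hu_mem k)
      have h2 := ENNReal.toReal_le_of_le_ofReal (hu_mem k).1 h1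
      exact h2.trans (min_le_left _ _)
    have ha0 : ∀ k, 0 ≤ a k := fun k =>
      div_nonneg ENNReal.toReal_nonneg ENNReal.toReal_nonneg
    have ha1 : ∀ k, a k ≤ 1 := by
      intro k
      rcases eq_or_lt_of_le (ENNReal.toReal_nonneg (a := Hm k)) with h | h
      · simp [ha, ← h]
      · rw [ha, div_le_one h]
        exact ENNReal.toReal_le_toReal (measure_ne_top μ _) (measure_ne_top μ _) |>.2
          (hGH k)
    -- key comparison from PRDS assumption
    have hzero : ∀ k, (Hm k).toReal = 0 → Hm k = 0 := by
      intro k hk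
      rcases (ENNReal.toReal_eq_zero_iff _).1 hk with h | h
      · exact h
      · exact absurd h (measure_ne_top μ _)
    have haz : ∀ k, Hm k = 0 → a k = 0 := by
      intro k hk
      rw [ha]
      simp only [hk, ENNReal.toReal_zero, _root_.div_zero]
    have had : ∀ k, a (k - 1) ≤ (Gm' k).toReal / (Hm k).toReal := by
      intro k
      rcases eq_or_lt_of_le (ENNReal.toReal_nonneg (a := Hm k)) with hk | hk
      · have hHk0 : Hm k = 0 := hzero k hk.symm
        have hHk10 : Hm (k - 1) = 0 := le_antisymm (hHk0 ▸ hHmono k) (zero_le)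
        rw [haz _ hHk10]
        exact div_nonneg ENNReal.toReal_nonneg ENNReal.toReal_nonneg
      · rcases eq_or_lt_of_le (ENNReal.toReal_nonneg (a := Hm (k - 1))) with hk1 | hk1
        · have hHk10 : Hm (k - 1) = 0 := hzero _ hk1.symm
          rw [haz _ hHk10]
          exact div_nonneg ENNReal.toReal_nonneg ENNReal.toReal_nonneg
        · have hm := hmono (lam ^ (k - 1)) (hzp (k - 1)) (u (k - 1)) (u k)
            (hu_mem (k - 1)) (hu_mem k) (hu_mono k)
          have hfin : ∀ s : Set Ω, μ s ≠ ⊤ := fun s => measure_ne_top μ s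
          have hm' : (Gm (k - 1)).toReal * (Hm k).toReal
              ≤ (Gm' k).toReal * (Hm (k - 1)).toReal := by
            have h1 := ENNReal.toReal_le_toReal
              (ENNReal.mul_ne_top (hfin _) (hfin _)) (ENNReal.mul_ne_top (hfin _) (hfin _)) |>.2 hm
            rwa [ENNReal.toReal_mul, ENNReal.toReal_mul] at h1
          rw [ha, div_le_div_iff₀ hk1 hk]
          exact hm'
    have hd0 : ∀ k, a (k - 1) ≤ a k := by
      intro k
      rcases eq_or_lt_of_le (ENNReal.toReal_nonneg (a := Hm k)) with hk | hk
      · have hHk0 : Hm k = 0 := hzero k hk.symm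
        have hHk10 : Hm (k - 1) = 0 := le_antisymm (hHk0 ▸ hHmono k) (zero_le)
        rw [haz _ hHk10]
        exact ha0 k
      · refine (had k).trans ?_
        rw [ha]
        exact div_le_div_of_nonneg_right
          ((ENNReal.toReal_le_toReal (measure_ne_top μ _) (measure_ne_top μ _)).2
            (hG'G k)) hk.le
    -- the per-term measure bound
    have hSk : ∀ k, μ (S k) ≤ ENNReal.ofReal (c * lam ^ k * (a k - a (k - 1))) := by
      intro k
      have hdisj : Disjoint (S k) ({ω | V ω < lam ^ (k - 1)} ∩ {ω | U ω ≤ u k}) := by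
        rw [Set.disjoint_left]
        intro ω hω hω'
        exact absurd hω'.1 (not_lt.2 hω.1)
      have hsub : S k ∪ ({ω | V ω < lam ^ (k - 1)} ∩ {ω | U ω ≤ u k})
          ⊆ {ω | V ω < lam ^ k} ∩ {ω | U ω ≤ u k} := by
        rintro ω (hω | hω)
        · exact ⟨hω.2.1, hω.2.2⟩
        · exact ⟨lt_of_lt_of_le hω.1 (hzmono k), hω.2⟩
      have hmeas' : MeasurableSet ({ω | V ω < lam ^ (k - 1)} ∩ {ω | U ω ≤ u k}) :=
        (measurableSet_lt hVmeas measurable_const).inter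
          (measurableSet_le hUmeas measurable_const)
      have hadd : μ (S k) + Gm' k ≤ Gm k := by
        rw [hGm', ← measure_union hdisj hmeas']
        exact measure_mono hsub
      have haddR : (μ (S k)).toReal + (Gm' k).toReal ≤ (Gm k).toReal := by
        have := ENNReal.toReal_le_toReal
          (ENNReal.add_ne_top.2 ⟨measure_ne_top μ _, measure_ne_top μ _⟩)
          (measure_ne_top μ _) |>.2 hadd
        rwa [ENNReal.toReal_add (measure_ne_top μ _) (measure_ne_top μ _)] at this
      have hreal : (μ (S k)).toReal ≤ c * lam ^ k * (a k - a (k - 1)) := by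
        rcases eq_or_lt_of_le (ENNReal.toReal_nonneg (a := Hm k)) with hk | hk
        · have hHk0 : Hm k = 0 := by
            have := hk.symm
            rwa [ENNReal.toReal_eq_zero_iff, or_iff_left (measure_ne_top μ _)] at this
          have hG0 : (Gm k).toReal = 0 := by
            have : Gm k = 0 := le_antisymm (hHk0 ▸ hGH k) (zero_le)
            simp [this]
          nlinarith [ENNReal.toReal_nonneg (a := μ (S k)),
            ENNReal.toReal_nonneg (a := Gm' k), hd0 k, hzp k, haddR, hc,
            mul_nonneg (mul_nonneg hc.le (hzp k).le) (by linarith [hd0 k] : (0:ℝ) ≤ a k - a (k - 1))]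
        · have h1 : (Gm k).toReal - (Gm' k).toReal ≤ (Hm k).toReal * (a k - a (k - 1)) := by
            have h2 : (Gm' k).toReal / (Hm k).toReal * (Hm k).toReal = (Gm' k).toReal :=
              div_mul_cancel₀ _ (ne_of_gt hk)
            have h3 : a k * (Hm k).toReal = (Gm k).toReal := by
              rw [ha]
              exact div_mul_cancel₀ _ (ne_of_gt hk)
            nlinarith [had k]
          have h4 : (Hm k).toReal * (a k - a (k - 1)) ≤ c * lam ^ k * (a k - a (k - 1)) :=
            mul_le_mul_of_nonneg_right (hH_le k) (by linarith [hd0 k])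
          linarith
      calc μ (S k) = ENNReal.ofReal ((μ (S k)).toReal) :=
            (ENNReal.ofReal_toReal (measure_ne_top μ _)).symm
        _ ≤ ENNReal.ofReal (c * lam ^ k * (a k - a (k - 1))) :=
            ENNReal.ofReal_le_ofReal hreal
    -- pointwise domination
    have hpt : ∀ ω, ENNReal.ofReal (f ω)
        ≤ ∑' k : ℤ, (S k).indicator (fun _ => ENNReal.ofReal (lam * (lam ^ k)⁻¹)) ω := by
      intro ω
      by_cases hcond : U ω ≤ c * V ω
      · rcases lt_or_ge 0 (V ω) with hV | hV
        · obtain ⟨n, hn1, hn2⟩ := exists_mem_Ico_zpow hV hlam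
          refine le_trans ?_ (ENNReal.le_tsum (n + 1))
          have hmem : ω ∈ S (n + 1) := by
            refine ⟨?_, ?_, ?_⟩
            · simpa using hn1
            · exact hn2
            · refine le_min ?_ (hU01 ω).2
              calc U ω ≤ c * V ω := hcond
                _ ≤ c * lam ^ (n + 1) := by nlinarith
          rw [Set.indicator_of_mem hmem]
          apply ENNReal.ofReal_le_ofReal
          have hfv : f ω = 1 / V ω := by simp [hf, hcond]
          rw [hfv, one_div]
          have heq : lam * (lam ^ (n + 1 : ℤ))⁻¹ = (lam ^ n)⁻¹ := by
            rw [zpow_add_one₀ (ne_of_gt hlam0)]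
            field_simp
          rw [heq]
          exact inv_anti₀ (hzp n) hn1
        · have hV0' : V ω = 0 := le_antisymm hV (hV0 ω)
          have : f ω = 0 := by simp [hf, hcond, hV0']
          simp [this]
      · have : f ω = 0 := by simp [hf, hcond]
        simp [this]
    -- combine
    calc ∫⁻ ω, ENNReal.ofReal (f ω) ∂μ
        ≤ ∫⁻ ω, ∑' k : ℤ,
            (S k).indicator (fun _ => ENNReal.ofReal (lam * (lam ^ k)⁻¹)) ω ∂μ :=
          lintegral_mono hpt
      _ = ∑' k : ℤ, ∫⁻ ω,
            (S k).indicator (fun _ => ENNReal.ofReal (lam * (lam ^ k)⁻¹)) ω ∂μ :=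
          lintegral_tsum (fun k =>
            ((measurable_const.indicator (hSmeas k)).aemeasurable))
      _ = ∑' k : ℤ, ENNReal.ofReal (lam * (lam ^ k)⁻¹) * μ (S k) := by
          congr 1
          funext k
          rw [lintegral_indicator (hSmeas k)]
          simp [mul_comm]
      _ ≤ ∑' k : ℤ, ENNReal.ofReal (lam * c) * ENNReal.ofReal (a k - a (k - 1)) := by
          apply ENNReal.tsum_le_tsum
          intro k
          calc ENNReal.ofReal (lam * (lam ^ k)⁻¹) * μ (S k)
              ≤ ENNReal.ofReal (lam * (lam ^ k)⁻¹)
                * ENNReal.ofReal (c * lam ^ k * (a k - a (k - 1))) :=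
                mul_le_mul_right (hSk k) _
            _ = ENNReal.ofReal (lam * c) * ENNReal.ofReal (a k - a (k - 1)) := by
                rw [← ENNReal.ofReal_mul (by positivity), ← ENNReal.ofReal_mul
                  (by positivity)]
                congr 1
                field_simp
      _ = ENNReal.ofReal (lam * c) * ∑' k : ℤ, ENNReal.ofReal (a k - a (k - 1)) :=
          ENNReal.tsum_mul_left
      _ ≤ ENNReal.ofReal (lam * c) * 1 :=
          mul_le_mul_right (tsum_ofReal_diff_le a ha0 ha1 hd0) _
      _ = ENNReal.ofReal (lam * c) := mul_one _
  -- pass to the limit lam → 1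
  have hL : ∫⁻ ω, ENNReal.ofReal (f ω) ∂μ ≤ ENNReal.ofReal c := by
    refine ENNReal.le_of_forall_pos_le_add ?_
    intro ε hε _
    have hεR : (0 : ℝ) < (ε : ℝ) := hε
    have h1 : (1 : ℝ) < 1 + (ε : ℝ) / c := by
      have := div_pos hεR hc
      linarith
    calc ∫⁻ ω, ENNReal.ofReal (f ω) ∂μ
        ≤ ENNReal.ofReal ((1 + (ε : ℝ) / c) * c) := key _ h1
      _ = ENNReal.ofReal (c + (ε : ℝ)) := by
          congr 1
          field_simp
      _ = ENNReal.ofReal c + ENNReal.ofReal (ε : ℝ) :=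
          ENNReal.ofReal_add hc.le hεR.le
      _ = ENNReal.ofReal c + (ε : ℝ≥0∞) := by rw [ENNReal.ofReal_coe_nnreal]
  rw [show (∫ ω, (if U ω ≤ c * V ω then 1 / V ω else 0) ∂μ) = ∫ ω, f ω ∂μ from rfl,
    integral_eq_lintegral_of_nonneg_ae (ae_of_all μ hfnonneg) hfmeas.aestronglyMeasurable]
  exact ENNReal.toReal_le_of_le_ofReal hc.le hL
end
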